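/- Negative 2-circuit linear complexity: consider the 2-dimensional regulatory network F(x_1, x_2) = (a x_1 + (1−a)H(T_{2,1} − x_2), a x_2 + (1−a)H(x_1 − T_{1,2})) with contraction rate a < 1/2 (so coordinatewise injectivity holds with K_{2,1} = K_{1,2} = 1). Then the complexity satisfies C(t) ≤ 2t + 2 for all t ∈ ℕ. -/
import Mathlib


/-- Heaviside function. -/
noncomputable def heav (x : ℝ) : ℝ := if x ≤ 0 then 0 else 1

/-- Dynamical partitions: `dynPartition F P t` is the paper's `P^{t+1}`
(so `dynPartition F P 0 = P = P^1`). -/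
def dynPartition {X : Type*} (F : X → X) (P : Set (Set X)) : ℕ → Set (Set X)
  | 0 => P
  | (t + 1) => {S | ∃ I ∈ dynPartition F P t, ∃ J ∈ P,
      S = F ⁻¹' I ∩ J ∧ S ≠ ∅}

/-- The negative circuit on 2 vertices:
`F(x₁,x₂) = (a x₁ + (1−a)H(T₂₁ − x₂), a x₂ + (1−a)H(x₁ − T₁₂))`. -/
noncomputable def negCircuit (a T12 T21 : ℝ) : ℝ × ℝ → ℝ × ℝ :=
  fun p => (a * p.1 + (1 - a) * heav (T21 - p.2),
            a * p.2 + (1 - a) * heav (p.1 - T12))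

/-- Base partition of `[0,1]²` into the (at most 4) atoms on which both Heaviside
terms are constant. -/
noncomputable def negCircuitBaseP (T12 T21 : ℝ) : Set (Set (ℝ × ℝ)) :=
  {A | ∃ q ∈ Set.Icc ((0:ℝ), (0:ℝ)) (1, 1),
    A = {p ∈ Set.Icc ((0:ℝ), (0:ℝ)) (1, 1) |
      heav (T21 - p.2) = heav (T21 - q.2) ∧
      heav (p.1 - T12) = heav (q.1 - T12)}}

namespace Stmt19

lemma heav01 (x : ℝ) : heav x = 0 ∨ heav x = 1 := by
  unfold heav; split <;> simp

lemma heav_nonneg (x : ℝ) : 0 ≤ heav x := by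
  rcases heav01 x with h | h <;> rw [h] <;> norm_num

lemma heav_le_one (x : ℝ) : heav x ≤ 1 := by
  rcases heav01 x with h | h <;> rw [h] <;> norm_num

lemma heav_eq_zero_iff (x : ℝ) : heav x = 0 ↔ x ≤ 0 := by
  unfold heav; split <;> simp_all

lemma heav_eq_one_iff (x : ℝ) : heav x = 1 ↔ 0 < x := by
  unfold heav; split <;> simp_all <;> linarith

lemma heav_resolve {u v : ℝ} (h : heav u ≠ heav v) :
    (u ≤ 0 ∧ 0 < v) ∨ (v ≤ 0 ∧ 0 < u) := by
  rcases heav01 u with hu | hu <;> rcases heav01 v with hv | hv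
  · exact absurd (hu.trans hv.symm) h
  · exact Or.inl ⟨(heav_eq_zero_iff u).1 hu, (heav_eq_one_iff v).1 hv⟩
  · exact Or.inr ⟨(heav_eq_zero_iff v).1 hv, (heav_eq_one_iff u).1 hu⟩
  · exact absurd (hu.trans hv.symm) h

lemma heav_two {u v w : ℝ} (h1 : heav u ≠ heav w) (h2 : heav v ≠ heav w) :
    heav u = heav v := by
  rcases heav01 u with hu | hu <;> rcases heav01 v with hv | hv <;>
    rcases heav01 w with hw | hw <;> simp_all

abbrev Icc2 : Set (ℝ × ℝ) := Set.Icc ((0:ℝ), (0:ℝ)) (1, 1)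

lemma mem_Icc2_iff (p : ℝ × ℝ) :
    p ∈ Icc2 ↔ (0 ≤ p.1 ∧ p.1 ≤ 1) ∧ (0 ≤ p.2 ∧ p.2 ≤ 1) := by
  simp [Icc2, Set.mem_Icc, Prod.le_def]; tauto

section Circuit

variable (a T12 T21 : ℝ)

lemma F_mem (ha0 : 0 ≤ a) (ha1 : a ≤ 1) {p : ℝ × ℝ} (hp : p ∈ Icc2) :
    negCircuit a T12 T21 p ∈ Icc2 := by
  rw [mem_Icc2_iff] at hp ⊢
  obtain ⟨⟨h1, h2⟩, h3, h4⟩ := hp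
  have g1 := heav_nonneg (T21 - p.2); have g2 := heav_le_one (T21 - p.2)
  have g3 := heav_nonneg (p.1 - T12); have g4 := heav_le_one (p.1 - T12)
  simp only [negCircuit]
  constructor <;> constructor <;> nlinarith

lemma iter_mem (ha0 : 0 ≤ a) (ha1 : a ≤ 1) {p : ℝ × ℝ} (hp : p ∈ Icc2) (k : ℕ) :
    (negCircuit a T12 T21)^[k] p ∈ Icc2 := by
  induction k with
  | zero => simpa using hp
  | succ n ih => rw [Function.iterate_succ_apply']; exact F_mem a T12 T21 ha0 ha1 ih

/-- itinerary bits -/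
noncomputable def sbit (k : ℕ) (p : ℝ × ℝ) : ℝ :=
  heav (T21 - ((negCircuit a T12 T21)^[k] p).2)

noncomputable def tbit (k : ℕ) (p : ℝ × ℝ) : ℝ :=
  heav (((negCircuit a T12 T21)^[k] p).1 - T12)

lemma sbit_shift (k : ℕ) (p : ℝ × ℝ) :
    sbit a T12 T21 k (negCircuit a T12 T21 p) = sbit a T12 T21 (k+1) p := by
  simp [sbit, Function.iterate_succ_apply]

lemma tbit_shift (k : ℕ) (p : ℝ × ℝ) :
    tbit a T12 T21 k (negCircuit a T12 T21 p) = tbit a T12 T21 (k+1) p := by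
  simp [tbit, Function.iterate_succ_apply]

noncomputable def atomOf (n : ℕ) (q : ℝ × ℝ) : Set (ℝ × ℝ) :=
  {p | p ∈ Icc2 ∧ ∀ k < n,
    sbit a T12 T21 k p = sbit a T12 T21 k q ∧ tbit a T12 T21 k p = tbit a T12 T21 k q}

def Atoms (n : ℕ) : Set (Set (ℝ × ℝ)) :=
  {S | ∃ q, q ∈ Icc2 ∧ S = atomOf a T12 T21 n q}

lemma mem_atomOf_self {q : ℝ × ℝ} (hq : q ∈ Icc2) (n : ℕ) :
    q ∈ atomOf a T12 T21 n q := ⟨hq, fun _ _ => ⟨rfl, rfl⟩⟩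

lemma atomOf_eq_of_bits {n : ℕ} {q q' : ℝ × ℝ}
    (h : ∀ k < n, sbit a T12 T21 k q = sbit a T12 T21 k q' ∧
      tbit a T12 T21 k q = tbit a T12 T21 k q') :
    atomOf a T12 T21 n q = atomOf a T12 T21 n q' := by
  ext p
  constructor <;> rintro ⟨hp, hb⟩ <;> refine ⟨hp, fun k hk => ?_⟩
  · exact ⟨(hb k hk).1.trans (h k hk).1, (hb k hk).2.trans (h k hk).2⟩
  · exact ⟨(hb k hk).1.trans (h k hk).1.symm, (hb k hk).2.trans (h k hk).2.symm⟩

end Circuit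


noncomputable def cc (a : ℝ) (σ : ℕ → ℝ) : ℕ → ℝ
  | 0 => 0
  | (n+1) => a * cc a σ n + (1-a) * σ n

lemma cc_congr {a : ℝ} {σ σ' : ℕ → ℝ} {n : ℕ} (h : ∀ k < n, σ k = σ' k) :
    cc a σ n = cc a σ' n := by
  induction n with
  | zero => rfl
  | succ m ih =>
      simp only [cc]
      rw [ih fun k hk => h k (hk.trans (Nat.lt_succ_self m)), h m (Nat.lt_succ_self m)]

lemma cc_bounds {a : ℝ} {σ : ℕ → ℝ} (ha0 : 0 ≤ a) (ha1 : a ≤ 1)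
    (hσ : ∀ k, σ k = 0 ∨ σ k = 1) (n : ℕ) :
    0 ≤ cc a σ n ∧ cc a σ n ≤ 1 - a ^ n := by
  induction n with
  | zero => simp [cc]
  | succ m ih =>
      obtain ⟨h1, h2⟩ := ih
      have hs : 0 ≤ σ m ∧ σ m ≤ 1 := by rcases hσ m with h | h <;> rw [h] <;> norm_num
      constructor
      · simp only [cc]; nlinarith
      · simp only [cc, pow_succ]; nlinarith

lemma cc_sep {a : ℝ} {σ σ' : ℕ → ℝ} (ha0 : 0 ≤ a) (ha : a < 1/2)
    (hσ : ∀ k, σ k = 0 ∨ σ k = 1) (hσ' : ∀ k, σ' k = 0 ∨ σ' k = 1) :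
    ∀ n, (∃ k < n, σ k ≠ σ' k) → a ^ n ≤ |cc a σ n - cc a σ' n| := by
  intro n
  induction n with
  | zero => rintro ⟨k, hk, -⟩; omega
  | succ m ih =>
      rintro ⟨k, hk, hne⟩
      by_cases hm : σ m = σ' m
      · have hk' : k < m := by
          rcases Nat.lt_succ_iff_lt_or_eq.1 hk with h | h
          · exact h
          · exact absurd (h ▸ hne) (by simp [hm])
        have := ih ⟨k, hk', hne⟩
        simp only [cc]
        have : a * a ^ m ≤ a * |cc a σ m - cc a σ' m| :=
          mul_le_mul_of_nonneg_left this ha0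
        calc a ^ (m+1) = a * a ^ m := by ring
          _ ≤ a * |cc a σ m - cc a σ' m| := this
          _ = |a * (cc a σ m - cc a σ' m)| := by
              rw [abs_mul, abs_of_nonneg ha0]
          _ = |a * cc a σ m - a * cc a σ' m| := by ring_nf
          _ ≤ |a * cc a σ m + (1-a) * σ m - (a * cc a σ' m + (1-a) * σ' m)| := by
              rw [hm]; apply le_of_eq; ring_nf
      · -- last bits differ
        have hb1 := cc_bounds ha0 (by linarith) hσ m
        have hb2 := cc_bounds ha0 (by linarith) hσ' m
        have hdist : |σ m - σ' m| = 1 := by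
          rcases hσ m with h | h <;> rcases hσ' m with h' | h' <;>
            simp [h, h'] at hm ⊢
        simp only [cc]
        have habs : |a * cc a σ m - a * cc a σ' m| ≤ a * (1 - a ^ m) := by
          rw [← mul_sub, abs_mul, abs_of_nonneg ha0]
          apply mul_le_mul_of_nonneg_left _ ha0
          rw [abs_le]; constructor <;> nlinarith [hb1.1, hb1.2, hb2.1, hb2.2]
        have h1a : |(1-a) * (σ m - σ' m)| = 1 - a := by
          rw [abs_mul, hdist, abs_of_nonneg (by linarith)]; ring
        calc a ^ (m+1) ≤ 1 - 2*a + a^(m+1) := by nlinarith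
          _ = (1 - a) - a * (1 - a^m) := by ring
          _ ≤ |(1-a) * (σ m - σ' m)| - |a * cc a σ m - a * cc a σ' m| := by
              rw [h1a]; linarith
          _ ≤ |a * cc a σ m + (1-a) * σ m - (a * cc a σ' m + (1-a) * σ' m)| := by
              have := abs_sub_abs_le_abs_sub ((1-a) * (σ m - σ' m))
                (a * cc a σ' m - a * cc a σ m)
              calc |(1-a) * (σ m - σ' m)| - |a * cc a σ m - a * cc a σ' m|
                  = |(1-a) * (σ m - σ' m)| - |a * cc a σ' m - a * cc a σ m| := by
                    rw [abs_sub_comm]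
                _ ≤ |(1-a) * (σ m - σ' m) - (a * cc a σ' m - a * cc a σ m)| := this
                _ = |a * cc a σ m + (1-a) * σ m - (a * cc a σ' m + (1-a) * σ' m)| := by
                    ring_nf


section Circuit

variable (a T12 T21 : ℝ)

lemma sbit01 (k : ℕ) (z : ℝ × ℝ) : sbit a T12 T21 k z = 0 ∨ sbit a T12 T21 k z = 1 :=
  heav01 _

lemma tbit01 (k : ℕ) (z : ℝ × ℝ) : tbit a T12 T21 k z = 0 ∨ tbit a T12 T21 k z = 1 :=
  heav01 _

lemma sbit_eq_zero_iff (k : ℕ) (z : ℝ × ℝ) :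
    sbit a T12 T21 k z = 0 ↔ T21 ≤ ((negCircuit a T12 T21)^[k] z).2 := by
  rw [sbit, heav_eq_zero_iff]; constructor <;> intro h <;> linarith

lemma sbit_eq_one_iff (k : ℕ) (z : ℝ × ℝ) :
    sbit a T12 T21 k z = 1 ↔ ((negCircuit a T12 T21)^[k] z).2 < T21 := by
  rw [sbit, heav_eq_one_iff]; constructor <;> intro h <;> linarith

lemma tbit_eq_zero_iff (k : ℕ) (z : ℝ × ℝ) :
    tbit a T12 T21 k z = 0 ↔ ((negCircuit a T12 T21)^[k] z).1 ≤ T12 := by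
  rw [tbit, heav_eq_zero_iff]; constructor <;> intro h <;> linarith

lemma tbit_eq_one_iff (k : ℕ) (z : ℝ × ℝ) :
    tbit a T12 T21 k z = 1 ↔ T12 < ((negCircuit a T12 T21)^[k] z).1 := by
  rw [tbit, heav_eq_one_iff]; constructor <;> intro h <;> linarith

lemma iter_fst (z : ℝ × ℝ) (n : ℕ) :
    ((negCircuit a T12 T21)^[n] z).1
      = a ^ n * z.1 + cc a (fun k => sbit a T12 T21 k z) n := by
  induction n with
  | zero => simp [cc]
  | succ m ih =>
      rw [Function.iterate_succ_apply']
      show a * ((negCircuit a T12 T21)^[m] z).1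
          + (1 - a) * heav (T21 - ((negCircuit a T12 T21)^[m] z).2) = _
      rw [ih]
      show _ = a ^ (m+1) * z.1 + (a * cc a (fun k => sbit a T12 T21 k z) m
        + (1-a) * sbit a T12 T21 m z)
      rw [sbit]; ring

lemma iter_snd (z : ℝ × ℝ) (n : ℕ) :
    ((negCircuit a T12 T21)^[n] z).2
      = a ^ n * z.2 + cc a (fun k => tbit a T12 T21 k z) n := by
  induction n with
  | zero => simp [cc]
  | succ m ih =>
      rw [Function.iterate_succ_apply']
      show a * ((negCircuit a T12 T21)^[m] z).2
          + (1 - a) * heav (((negCircuit a T12 T21)^[m] z).1 - T12) = _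
      rw [ih]
      show _ = a ^ (m+1) * z.2 + (a * cc a (fun k => tbit a T12 T21 k z) m
        + (1-a) * tbit a T12 T21 m z)
      rw [tbit]; ring

lemma cc_s_of_mem {m k : ℕ} (hk : k ≤ m) {q z : ℝ × ℝ} (hz : z ∈ atomOf a T12 T21 m q) :
    cc a (fun j => sbit a T12 T21 j z) k = cc a (fun j => sbit a T12 T21 j q) k :=
  cc_congr (fun j hj => (hz.2 j (lt_of_lt_of_le hj hk)).1)

lemma cc_t_of_mem {m k : ℕ} (hk : k ≤ m) {q z : ℝ × ℝ} (hz : z ∈ atomOf a T12 T21 m q) :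
    cc a (fun j => tbit a T12 T21 j z) k = cc a (fun j => tbit a T12 T21 j q) k :=
  cc_congr (fun j hj => (hz.2 j (lt_of_lt_of_le hj hk)).2)

def straddle1 (m : ℕ) (T : Set (ℝ × ℝ)) : Prop :=
  ∃ x ∈ T, ∃ y ∈ T,
    ((negCircuit a T12 T21)^[m] x).1 ≤ T12 ∧ T12 < ((negCircuit a T12 T21)^[m] y).1

def straddle2 (m : ℕ) (T : Set (ℝ × ℝ)) : Prop :=
  ∃ x ∈ T, ∃ y ∈ T,
    T21 ≤ ((negCircuit a T12 T21)^[m] x).2 ∧ ((negCircuit a T12 T21)^[m] y).2 < T21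

lemma U1 (ha0 : 0 ≤ a) (ha : a < 1/2) {m : ℕ} (hm : 1 ≤ m) {q q' : ℝ × ℝ}
    (h : straddle1 a T12 T21 m (atomOf a T12 T21 m q))
    (h' : straddle1 a T12 T21 m (atomOf a T12 T21 m q')) :
    atomOf a T12 T21 m q = atomOf a T12 T21 m q' := by
  obtain ⟨x, hx, y, hy, hxle, hylt⟩ := h
  obtain ⟨x', hx', y', hy', hxle', hylt'⟩ := h'
  have ham : (0:ℝ) ≤ a ^ m := pow_nonneg ha0 m
  have ex : a ^ m * x.1 + cc a (fun j => sbit a T12 T21 j q) m ≤ T12 := by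
    rw [iter_fst, cc_s_of_mem a T12 T21 le_rfl hx] at hxle; exact hxle
  have ey : T12 < a ^ m * y.1 + cc a (fun j => sbit a T12 T21 j q) m := by
    rw [iter_fst, cc_s_of_mem a T12 T21 le_rfl hy] at hylt; exact hylt
  have ex' : a ^ m * x'.1 + cc a (fun j => sbit a T12 T21 j q') m ≤ T12 := by
    rw [iter_fst, cc_s_of_mem a T12 T21 le_rfl hx'] at hxle'; exact hxle'
  have ey' : T12 < a ^ m * y'.1 + cc a (fun j => sbit a T12 T21 j q') m := by
    rw [iter_fst, cc_s_of_mem a T12 T21 le_rfl hy'] at hylt'; exact hylt'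
  have hx1 := (mem_Icc2_iff x).1 hx.1
  have hy1 := (mem_Icc2_iff y).1 hy.1
  have hx1' := (mem_Icc2_iff x').1 hx'.1
  have hy1' := (mem_Icc2_iff y').1 hy'.1
  have key1 : cc a (fun j => sbit a T12 T21 j q) m ≤ T12 := by nlinarith [hx1.1.1, hx1.1.2]
  have key2 : T12 < a ^ m + cc a (fun j => sbit a T12 T21 j q) m := by
    nlinarith [hy1.1.1, hy1.1.2]
  have key1' : cc a (fun j => sbit a T12 T21 j q') m ≤ T12 := by nlinarith [hx1'.1.1, hx1'.1.2]
  have key2' : T12 < a ^ m + cc a (fun j => sbit a T12 T21 j q') m := by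
    nlinarith [hy1'.1.1, hy1'.1.2]
  rcases eq_or_lt_of_le ha0 with h0 | h0
  · exfalso
    have : a ^ m = 0 := by rw [← h0]; exact zero_pow (by omega)
    rw [this] at key2; linarith
  -- s-bits agree below m
  have hsb : ∀ k < m, sbit a T12 T21 k q = sbit a T12 T21 k q' := by
    by_contra hc
    push_neg at hc
    obtain ⟨k, hk, hne⟩ := hc
    have hsep := cc_sep ha0 ha (fun j => sbit01 a T12 T21 j q) (fun j => sbit01 a T12 T21 j q')
      m ⟨k, hk, hne⟩
    have : |cc a (fun j => sbit a T12 T21 j q) m - cc a (fun j => sbit a T12 T21 j q') m|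
        < a ^ m := abs_sub_lt_iff.2 ⟨by linarith, by linarith⟩
    linarith
  have hcq : cc a (fun j => sbit a T12 T21 j q) m = cc a (fun j => sbit a T12 T21 j q') m :=
    cc_congr hsb
  -- t-bits agree below m
  have htb : ∀ k < m, tbit a T12 T21 k q = tbit a T12 T21 k q' := by
    intro k hk
    by_contra hne
    have hak : (0:ℝ) < a ^ k := pow_pos h0 k
    -- common value of cc at level k for points in either atom
    have hccq' : cc a (fun j => sbit a T12 T21 j q') k = cc a (fun j => sbit a T12 T21 j q) k :=
      (cc_congr (fun j hj => hsb j (lt_of_lt_of_le hj (le_of_lt hk)))).symm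
    have fst_q : ∀ z, z ∈ atomOf a T12 T21 m q →
        ((negCircuit a T12 T21)^[k] z).1 = a ^ k * z.1 + cc a (fun j => sbit a T12 T21 j q) k := by
      intro z hz; rw [iter_fst, cc_s_of_mem a T12 T21 (le_of_lt hk) hz]
    have fst_q' : ∀ z, z ∈ atomOf a T12 T21 m q' →
        ((negCircuit a T12 T21)^[k] z).1 = a ^ k * z.1 + cc a (fun j => sbit a T12 T21 j q) k := by
      intro z hz; rw [iter_fst, cc_s_of_mem a T12 T21 (le_of_lt hk) hz, hccq']
    rcases heav_resolve hne with ⟨hu, hv⟩ | ⟨hu, hv⟩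
    · -- (F^k q).1 ≤ T12 on atom q ; T12 < (F^k q').1 on atom q'
      have cls_q : ∀ z, z ∈ atomOf a T12 T21 m q →
          a ^ k * z.1 + cc a (fun j => sbit a T12 T21 j q) k ≤ T12 := by
        intro z hz
        have h1 : tbit a T12 T21 k z = 0 :=
          ((hz.2 k hk).2).trans ((heav_eq_zero_iff _).2 hu)
        have h2 := (tbit_eq_zero_iff a T12 T21 k z).1 h1
        rwa [fst_q z hz] at h2
      have cls_q' : ∀ z, z ∈ atomOf a T12 T21 m q' →
          T12 < a ^ k * z.1 + cc a (fun j => sbit a T12 T21 j q) k := by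
        intro z hz
        have h1 : tbit a T12 T21 k z = 1 :=
          ((hz.2 k hk).2).trans ((heav_eq_one_iff _).2 hv)
        have h2 := (tbit_eq_one_iff a T12 T21 k z).1 h1
        rwa [fst_q' z hz] at h2
      have c1 := cls_q y hy
      have c2 := cls_q' x' hx'
      rw [← hcq] at ex'
      have hlt1 : a ^ k * y.1 < a ^ k * x'.1 := by linarith
      have hlt2 : a ^ m * x'.1 < a ^ m * y.1 := by linarith
      have e1 := (mul_lt_mul_iff_right₀ hak).1 hlt1
      have e2 := (mul_lt_mul_iff_right₀ (pow_pos h0 m)).1 hlt2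
      linarith
    · -- symmetric: T12 < (F^k q).1 on atom q ; (F^k q').1 ≤ T12 on atom q'
      have cls_q : ∀ z, z ∈ atomOf a T12 T21 m q →
          T12 < a ^ k * z.1 + cc a (fun j => sbit a T12 T21 j q) k := by
        intro z hz
        have h1 : tbit a T12 T21 k z = 1 :=
          ((hz.2 k hk).2).trans ((heav_eq_one_iff _).2 hv)
        have h2 := (tbit_eq_one_iff a T12 T21 k z).1 h1
        rwa [fst_q z hz] at h2
      have cls_q' : ∀ z, z ∈ atomOf a T12 T21 m q' →
          a ^ k * z.1 + cc a (fun j => sbit a T12 T21 j q) k ≤ T12 := by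
        intro z hz
        have h1 : tbit a T12 T21 k z = 0 :=
          ((hz.2 k hk).2).trans ((heav_eq_zero_iff _).2 hu)
        have h2 := (tbit_eq_zero_iff a T12 T21 k z).1 h1
        rwa [fst_q' z hz] at h2
      have c1 := cls_q x hx
      have c2 := cls_q' y' hy'
      rw [← hcq] at ey'
      have hlt1 : a ^ k * y'.1 < a ^ k * x.1 := by linarith
      have hlt2 : a ^ m * x.1 < a ^ m * y'.1 := by linarith
      have e1 := (mul_lt_mul_iff_right₀ hak).1 hlt1
      have e2 := (mul_lt_mul_iff_right₀ (pow_pos h0 m)).1 hlt2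
      linarith
  exact atomOf_eq_of_bits a T12 T21 (fun k hk => ⟨hsb k hk, htb k hk⟩)

end Circuit


section Circuit2

variable (a T12 T21 : ℝ)

lemma U2 (ha0 : 0 ≤ a) (ha : a < 1/2) {m : ℕ} (hm : 1 ≤ m) {q q' : ℝ × ℝ}
    (h : straddle2 a T12 T21 m (atomOf a T12 T21 m q))
    (h' : straddle2 a T12 T21 m (atomOf a T12 T21 m q')) :
    atomOf a T12 T21 m q = atomOf a T12 T21 m q' := by
  obtain ⟨x, hx, y, hy, hxge, hylt⟩ := h
  obtain ⟨x', hx', y', hy', hxge', hylt'⟩ := h'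
  have ham : (0:ℝ) ≤ a ^ m := pow_nonneg ha0 m
  have ex : T21 ≤ a ^ m * x.2 + cc a (fun j => tbit a T12 T21 j q) m := by
    rw [iter_snd, cc_t_of_mem a T12 T21 le_rfl hx] at hxge; exact hxge
  have ey : a ^ m * y.2 + cc a (fun j => tbit a T12 T21 j q) m < T21 := by
    rw [iter_snd, cc_t_of_mem a T12 T21 le_rfl hy] at hylt; exact hylt
  have ex' : T21 ≤ a ^ m * x'.2 + cc a (fun j => tbit a T12 T21 j q') m := by
    rw [iter_snd, cc_t_of_mem a T12 T21 le_rfl hx'] at hxge'; exact hxge'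
  have ey' : a ^ m * y'.2 + cc a (fun j => tbit a T12 T21 j q') m < T21 := by
    rw [iter_snd, cc_t_of_mem a T12 T21 le_rfl hy'] at hylt'; exact hylt'
  have hx1 := (mem_Icc2_iff x).1 hx.1
  have hy1 := (mem_Icc2_iff y).1 hy.1
  have hx1' := (mem_Icc2_iff x').1 hx'.1
  have hy1' := (mem_Icc2_iff y').1 hy'.1
  have key1 : cc a (fun j => tbit a T12 T21 j q) m < T21 := by nlinarith [hy1.2.1, hy1.2.2]
  have key2 : T21 ≤ a ^ m + cc a (fun j => tbit a T12 T21 j q) m := by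
    nlinarith [hx1.2.1, hx1.2.2]
  have key1' : cc a (fun j => tbit a T12 T21 j q') m < T21 := by nlinarith [hy1'.2.1, hy1'.2.2]
  have key2' : T21 ≤ a ^ m + cc a (fun j => tbit a T12 T21 j q') m := by
    nlinarith [hx1'.2.1, hx1'.2.2]
  rcases eq_or_lt_of_le ha0 with h0 | h0
  · exfalso
    have : a ^ m = 0 := by rw [← h0]; exact zero_pow (by omega)
    rw [this] at key2; linarith
  have htb : ∀ k < m, tbit a T12 T21 k q = tbit a T12 T21 k q' := by
    by_contra hc
    push_neg at hc
    obtain ⟨k, hk, hne⟩ := hc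
    have hsep := cc_sep ha0 ha (fun j => tbit01 a T12 T21 j q) (fun j => tbit01 a T12 T21 j q')
      m ⟨k, hk, hne⟩
    have : |cc a (fun j => tbit a T12 T21 j q) m - cc a (fun j => tbit a T12 T21 j q') m|
        < a ^ m := abs_sub_lt_iff.2 ⟨by linarith, by linarith⟩
    linarith
  have hcq : cc a (fun j => tbit a T12 T21 j q) m = cc a (fun j => tbit a T12 T21 j q') m :=
    cc_congr htb
  have hsb : ∀ k < m, sbit a T12 T21 k q = sbit a T12 T21 k q' := by
    intro k hk
    by_contra hne
    have hak : (0:ℝ) < a ^ k := pow_pos h0 k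
    have hccq' : cc a (fun j => tbit a T12 T21 j q') k = cc a (fun j => tbit a T12 T21 j q) k :=
      (cc_congr (fun j hj => htb j (lt_of_lt_of_le hj (le_of_lt hk)))).symm
    have snd_q : ∀ z, z ∈ atomOf a T12 T21 m q →
        ((negCircuit a T12 T21)^[k] z).2 = a ^ k * z.2 + cc a (fun j => tbit a T12 T21 j q) k := by
      intro z hz; rw [iter_snd, cc_t_of_mem a T12 T21 (le_of_lt hk) hz]
    have snd_q' : ∀ z, z ∈ atomOf a T12 T21 m q' →
        ((negCircuit a T12 T21)^[k] z).2 = a ^ k * z.2 + cc a (fun j => tbit a T12 T21 j q) k := by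
      intro z hz; rw [iter_snd, cc_t_of_mem a T12 T21 (le_of_lt hk) hz, hccq']
    rcases heav_resolve hne with ⟨hu, hv⟩ | ⟨hu, hv⟩
    · -- T21 ≤ (F^k q).2 on atom q ; (F^k q').2 < T21 on atom q'
      have cls_q : ∀ z, z ∈ atomOf a T12 T21 m q →
          T21 ≤ a ^ k * z.2 + cc a (fun j => tbit a T12 T21 j q) k := by
        intro z hz
        have h1 : sbit a T12 T21 k z = 0 :=
          ((hz.2 k hk).1).trans ((heav_eq_zero_iff _).2 hu)
        have h2 := (sbit_eq_zero_iff a T12 T21 k z).1 h1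
        rwa [snd_q z hz] at h2
      have cls_q' : ∀ z, z ∈ atomOf a T12 T21 m q' →
          a ^ k * z.2 + cc a (fun j => tbit a T12 T21 j q) k < T21 := by
        intro z hz
        have h1 : sbit a T12 T21 k z = 1 :=
          ((hz.2 k hk).1).trans ((heav_eq_one_iff _).2 hv)
        have h2 := (sbit_eq_one_iff a T12 T21 k z).1 h1
        rwa [snd_q' z hz] at h2
      have c1 := cls_q y hy
      have c2 := cls_q' x' hx'
      rw [← hcq] at ex'
      have hlt1 : a ^ k * x'.2 < a ^ k * y.2 := by linarith
      have hlt2 : a ^ m * y.2 < a ^ m * x'.2 := by linarith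
      have e1 := (mul_lt_mul_iff_right₀ hak).1 hlt1
      have e2 := (mul_lt_mul_iff_right₀ (pow_pos h0 m)).1 hlt2
      linarith
    · -- (F^k q).2 < T21 on atom q ; T21 ≤ (F^k q').2 on atom q'
      have cls_q : ∀ z, z ∈ atomOf a T12 T21 m q →
          a ^ k * z.2 + cc a (fun j => tbit a T12 T21 j q) k < T21 := by
        intro z hz
        have h1 : sbit a T12 T21 k z = 1 :=
          ((hz.2 k hk).1).trans ((heav_eq_one_iff _).2 hv)
        have h2 := (sbit_eq_one_iff a T12 T21 k z).1 h1
        rwa [snd_q z hz] at h2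
      have cls_q' : ∀ z, z ∈ atomOf a T12 T21 m q' →
          T21 ≤ a ^ k * z.2 + cc a (fun j => tbit a T12 T21 j q) k := by
        intro z hz
        have h1 : sbit a T12 T21 k z = 0 :=
          ((hz.2 k hk).1).trans ((heav_eq_zero_iff _).2 hu)
        have h2 := (sbit_eq_zero_iff a T12 T21 k z).1 h1
        rwa [snd_q' z hz] at h2
      have c1 := cls_q x hx
      have c2 := cls_q' y' hy'
      rw [← hcq] at ey'
      have hlt1 : a ^ k * x.2 < a ^ k * y'.2 := by linarith
      have hlt2 : a ^ m * y'.2 < a ^ m * x.2 := by linarith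
      have e1 := (mul_lt_mul_iff_right₀ hak).1 hlt1
      have e2 := (mul_lt_mul_iff_right₀ (pow_pos h0 m)).1 hlt2
      linarith
  exact atomOf_eq_of_bits a T12 T21 (fun k hk => ⟨hsb k hk, htb k hk⟩)

lemma ND (ha0 : 0 ≤ a) (ha : a < 1/2) (hT12 : T12 ∈ Set.Icc (0:ℝ) 1)
    (hT21 : T21 ∈ Set.Icc (0:ℝ) 1) {m : ℕ} (hm : 1 ≤ m) {q : ℝ × ℝ}
    (h1 : straddle1 a T12 T21 m (atomOf a T12 T21 m q))
    (h2 : straddle2 a T12 T21 m (atomOf a T12 T21 m q)) : False := by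
  have ha1 : a ≤ 1 := by linarith
  obtain ⟨m', rfl⟩ : ∃ m', m = m' + 1 := ⟨m - 1, by omega⟩
  obtain ⟨x, hx, y, hy, hxle, hylt⟩ := h1
  obtain ⟨u, hu, w, hw, huge, hwlt⟩ := h2
  have hm' : m' < m' + 1 := Nat.lt_succ_self m'
  have expand1 : ∀ z : ℝ × ℝ, ((negCircuit a T12 T21)^[m'+1] z).1
      = a * ((negCircuit a T12 T21)^[m'] z).1 + (1-a) * sbit a T12 T21 m' z := by
    intro z; rw [Function.iterate_succ_apply']; rfl
  have expand2 : ∀ z : ℝ × ℝ, ((negCircuit a T12 T21)^[m'+1] z).2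
      = a * ((negCircuit a T12 T21)^[m'] z).2 + (1-a) * tbit a T12 T21 m' z := by
    intro z; rw [Function.iterate_succ_apply']; rfl
  rcases sbit01 a T12 T21 m' q with hs | hs
  · -- T21 ≤ (F^[m'] z).2 for all z in the atom
    have hcls : ∀ z, z ∈ atomOf a T12 T21 (m'+1) q →
        T21 ≤ ((negCircuit a T12 T21)^[m'] z).2 := by
      intro z hz
      exact (sbit_eq_zero_iff a T12 T21 m' z).1 (((hz.2 m' hm').1).trans hs)
    rcases tbit01 a T12 T21 m' q with ht | ht
    · -- (F^[m'] z).1 ≤ T12 for all z in the atom; use hylt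
      have hclt : ∀ z, z ∈ atomOf a T12 T21 (m'+1) q →
          ((negCircuit a T12 T21)^[m'] z).1 ≤ T12 := by
        intro z hz
        exact (tbit_eq_zero_iff a T12 T21 m' z).1 (((hz.2 m' hm').2).trans ht)
      have hsy : sbit a T12 T21 m' y = 0 := ((hy.2 m' hm').1).trans hs
      have e1 := expand1 y
      rw [hsy] at e1
      have h1 := hclt y hy
      have h0 : 0 ≤ ((negCircuit a T12 T21)^[m'] y).1 :=
        ((mem_Icc2_iff _).1 (iter_mem a T12 T21 ha0 ha1 hy.1 m')).1.1
      rw [e1] at hylt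
      nlinarith [hT12.1]
    · -- T12 < (F^[m'] z).1 for all z; use hwlt
      have hsw : tbit a T12 T21 m' w = 1 := ((hw.2 m' hm').2).trans ht
      have e2 := expand2 w
      rw [hsw] at e2
      have h1 := hcls w hw
      rw [e2] at hwlt
      nlinarith [hT21.2, mul_le_mul_of_nonneg_left h1 ha0]
  · -- (F^[m'] z).2 < T21 for all z in the atom
    have hcls : ∀ z, z ∈ atomOf a T12 T21 (m'+1) q →
        ((negCircuit a T12 T21)^[m'] z).2 < T21 := by
      intro z hz
      exact (sbit_eq_one_iff a T12 T21 m' z).1 (((hz.2 m' hm').1).trans hs)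
    rcases tbit01 a T12 T21 m' q with ht | ht
    · -- use huge
      have hsu : tbit a T12 T21 m' u = 0 := ((hu.2 m' hm').2).trans ht
      have e2 := expand2 u
      rw [hsu] at e2
      have h1 := hcls u hu
      have h0 : 0 ≤ ((negCircuit a T12 T21)^[m'] u).2 :=
        ((mem_Icc2_iff _).1 (iter_mem a T12 T21 ha0 ha1 hu.1 m')).2.1
      rw [e2] at huge
      nlinarith [hT21.1, mul_le_mul_of_nonneg_left (le_of_lt h1) ha0]
    · -- use hxle
      have hsx : sbit a T12 T21 m' x = 1 := ((hx.2 m' hm').1).trans hs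
      have hclt : ∀ z, z ∈ atomOf a T12 T21 (m'+1) q →
          T12 < ((negCircuit a T12 T21)^[m'] z).1 := by
        intro z hz
        exact (tbit_eq_one_iff a T12 T21 m' z).1 (((hz.2 m' hm').2).trans ht)
      have e1 := expand1 x
      rw [hsx] at e1
      have h1 := hclt x hx
      have hv1 : ((negCircuit a T12 T21)^[m'] x).1 ≤ 1 :=
        ((mem_Icc2_iff _).1 (iter_mem a T12 T21 ha0 ha1 hx.1 m')).1.2
      rw [e1] at hxle
      nlinarith [mul_le_mul_of_nonneg_left hv1 (by linarith : (0:ℝ) ≤ 1 - a)]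

end Circuit2


section Partition

variable (a T12 T21 : ℝ)

lemma forall_lt_succ_iff' {Q : ℕ → Prop} (n : ℕ) :
    (∀ k < n+1, Q k) ↔ Q 0 ∧ ∀ k < n, Q (k+1) := by
  constructor
  · intro h; exact ⟨h 0 (by omega), fun k hk => h (k+1) (by omega)⟩
  · rintro ⟨h0, h⟩ k hk
    cases k with
    | zero => exact h0
    | succ k => exact h k (by omega)

/-- The set `F⁻¹(atom of w at level n+1) ∩ (base atom of r)`, described by bits. -/
def Eset (w r : ℝ × ℝ) (n : ℕ) : Set (ℝ × ℝ) :=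
  {p | p ∈ Icc2 ∧ (sbit a T12 T21 0 p = sbit a T12 T21 0 r
      ∧ tbit a T12 T21 0 p = tbit a T12 T21 0 r)
    ∧ ∀ k < n+1, sbit a T12 T21 (k+1) p = sbit a T12 T21 k w
      ∧ tbit a T12 T21 (k+1) p = tbit a T12 T21 k w}

lemma sbit_zero (p : ℝ × ℝ) : sbit a T12 T21 0 p = heav (T21 - p.2) := by
  simp [sbit]

lemma tbit_zero (p : ℝ × ℝ) : tbit a T12 T21 0 p = heav (p.1 - T12) := by
  simp [tbit]

lemma preimage_base (ha0 : 0 ≤ a) (ha1 : a ≤ 1) (w r : ℝ × ℝ) (n : ℕ) :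
    (negCircuit a T12 T21) ⁻¹' (atomOf a T12 T21 (n+1) w) ∩
      {p ∈ Icc2 | heav (T21 - p.2) = heav (T21 - r.2)
        ∧ heav (p.1 - T12) = heav (r.1 - T12)}
    = Eset a T12 T21 w r n := by
  ext p
  constructor
  · rintro ⟨hF, hpIcc, hb1, hb2⟩
    obtain ⟨hFIcc, hFb⟩ := hF
    refine ⟨hpIcc, ⟨?_, ?_⟩, fun k hk => ?_⟩
    · rw [sbit_zero, sbit_zero]; exact hb1
    · rw [tbit_zero, tbit_zero]; exact hb2
    · rw [← sbit_shift, ← tbit_shift]; exact hFb k hk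
  · rintro ⟨hpIcc, ⟨hb1, hb2⟩, hrest⟩
    refine ⟨⟨F_mem a T12 T21 ha0 ha1 hpIcc, fun k hk => ?_⟩, hpIcc, ?_, ?_⟩
    · rw [sbit_shift, tbit_shift]; exact hrest k hk
    · rw [← sbit_zero, ← sbit_zero]; exact hb1
    · rw [← tbit_zero, ← tbit_zero]; exact hb2

lemma Eset_eq_atom {w r p : ℝ × ℝ} {n : ℕ} (hp : p ∈ Eset a T12 T21 w r n) :
    Eset a T12 T21 w r n = atomOf a T12 T21 (n+2) p := by
  obtain ⟨hpIcc, ⟨hp1, hp2⟩, hpr⟩ := hp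
  ext z
  constructor
  · rintro ⟨hz, ⟨hz1, hz2⟩, hzr⟩
    refine ⟨hz, ?_⟩
    rw [show n + 2 = (n+1)+1 from rfl, forall_lt_succ_iff']
    exact ⟨⟨hz1.trans hp1.symm, hz2.trans hp2.symm⟩,
      fun k hk => ⟨(hzr k hk).1.trans (hpr k hk).1.symm,
        (hzr k hk).2.trans (hpr k hk).2.symm⟩⟩
  · rintro ⟨hz, hb⟩
    rw [show n + 2 = (n+1)+1 from rfl, forall_lt_succ_iff'] at hb
    obtain ⟨⟨hb1, hb2⟩, hbs⟩ := hb
    exact ⟨hz, ⟨hb1.trans hp1, hb2.trans hp2⟩,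
      fun k hk => ⟨(hbs k hk).1.trans (hpr k hk).1,
        (hbs k hk).2.trans (hpr k hk).2⟩⟩

lemma p_mem_Eset_self {p : ℝ × ℝ} (hp : p ∈ Icc2) (n : ℕ) :
    p ∈ Eset a T12 T21 (negCircuit a T12 T21 p) p n :=
  ⟨hp, ⟨rfl, rfl⟩, fun k _ => ⟨(sbit_shift a T12 T21 k p), (tbit_shift a T12 T21 k p)⟩⟩

lemma base_eq_atom1 (q : ℝ × ℝ) :
    {p ∈ Icc2 | heav (T21 - p.2) = heav (T21 - q.2)
      ∧ heav (p.1 - T12) = heav (q.1 - T12)} = atomOf a T12 T21 1 q := by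
  ext p
  constructor
  · rintro ⟨h1, h2, h3⟩
    refine ⟨h1, fun k hk => ?_⟩
    obtain rfl : k = 0 := Nat.lt_one_iff.1 hk
    rw [sbit_zero, sbit_zero, tbit_zero, tbit_zero]
    exact ⟨h2, h3⟩
  · rintro ⟨h1, h2⟩
    have := h2 0 Nat.one_pos
    rw [sbit_zero, sbit_zero, tbit_zero, tbit_zero] at this
    exact ⟨h1, this.1, this.2⟩

lemma dyn_eq (ha0 : 0 ≤ a) (ha1 : a ≤ 1) :
    ∀ n, dynPartition (negCircuit a T12 T21) (negCircuitBaseP T12 T21) n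
      = Atoms a T12 T21 (n+1) := by
  intro n
  induction n with
  | zero =>
      show negCircuitBaseP T12 T21 = _
      ext S
      constructor
      · rintro ⟨q, hq, rfl⟩
        exact ⟨q, hq, by simpa using base_eq_atom1 a T12 T21 q⟩
      · rintro ⟨q, hq, rfl⟩
        exact ⟨q, hq, by simpa using (base_eq_atom1 a T12 T21 q).symm⟩
  | succ n ih =>
      show {S | ∃ I ∈ dynPartition _ _ n, ∃ J ∈ negCircuitBaseP T12 T21,
          S = (negCircuit a T12 T21) ⁻¹' I ∩ J ∧ S ≠ ∅} = _
      ext S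
      constructor
      · rintro ⟨I, hI, J, hJ, rfl, hne⟩
        rw [ih] at hI
        obtain ⟨w, hw, rfl⟩ := hI
        obtain ⟨r, hr, rfl⟩ := hJ
        rw [preimage_base a T12 T21 ha0 ha1 w r n]
        obtain ⟨p, hp⟩ := Set.nonempty_iff_ne_empty.2
          (by rwa [preimage_base a T12 T21 ha0 ha1 w r n] at hne)
        exact ⟨p, (hp : p ∈ Eset a T12 T21 w r n).1, Eset_eq_atom a T12 T21 hp⟩
      · rintro ⟨p, hp, rfl⟩
        refine ⟨atomOf a T12 T21 (n+1) (negCircuit a T12 T21 p), ?_,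
          {z ∈ Icc2 | heav (T21 - z.2) = heav (T21 - p.2)
            ∧ heav (z.1 - T12) = heav (p.1 - T12)}, ⟨p, hp, rfl⟩, ?_, ?_⟩
        · rw [ih]
          exact ⟨negCircuit a T12 T21 p, F_mem a T12 T21 ha0 ha1 hp, rfl⟩
        · rw [preimage_base a T12 T21 ha0 ha1 _ p n]
          exact (Eset_eq_atom a T12 T21 (p_mem_Eset_self a T12 T21 hp n)).symm
        · apply Set.nonempty_iff_ne_empty.1
          exact ⟨p, mem_atomOf_self a T12 T21 hp (n+2)⟩

end Partition


section Counting

variable (a T12 T21 : ℝ)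

/-- canonical point of the level-`m` atom of `q` -/
noncomputable def cpt (m : ℕ) (q : ℝ × ℝ) : ℝ × ℝ :=
  Classical.epsilon (fun x => x ∈ atomOf a T12 T21 m q ∧ x ∈ Icc2)

lemma cpt_spec {m : ℕ} {q : ℝ × ℝ} (hq : q ∈ Icc2) :
    cpt a T12 T21 m q ∈ atomOf a T12 T21 m q ∧ cpt a T12 T21 m q ∈ Icc2 :=
  Classical.epsilon_spec
    (p := fun x => x ∈ atomOf a T12 T21 m q ∧ x ∈ Icc2)
    ⟨q, mem_atomOf_self a T12 T21 hq m, hq⟩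

lemma cpt_congr {m : ℕ} {q q' : ℝ × ℝ} (h : atomOf a T12 T21 m q = atomOf a T12 T21 m q') :
    cpt a T12 T21 m q = cpt a T12 T21 m q' := by
  unfold cpt; rw [h]

lemma straddle1_of_ne {m : ℕ} {u z : ℝ × ℝ} (hu : u ∈ Icc2)
    (hz : z ∈ atomOf a T12 T21 m u) (hne : tbit a T12 T21 m u ≠ tbit a T12 T21 m z) :
    straddle1 a T12 T21 m (atomOf a T12 T21 m u) := by
  rcases heav_resolve hne with ⟨h1, h2⟩ | ⟨h1, h2⟩
  · exact ⟨u, mem_atomOf_self a T12 T21 hu m, z, hz, by linarith, by linarith⟩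
  · exact ⟨z, hz, u, mem_atomOf_self a T12 T21 hu m, by linarith, by linarith⟩

lemma straddle2_of_ne {m : ℕ} {u z : ℝ × ℝ} (hu : u ∈ Icc2)
    (hz : z ∈ atomOf a T12 T21 m u) (hne : sbit a T12 T21 m u ≠ sbit a T12 T21 m z) :
    straddle2 a T12 T21 m (atomOf a T12 T21 m u) := by
  rcases heav_resolve hne with ⟨h1, h2⟩ | ⟨h1, h2⟩
  · exact ⟨u, mem_atomOf_self a T12 T21 hu m, z, hz, by linarith, by linarith⟩
  · exact ⟨z, hz, u, mem_atomOf_self a T12 T21 hu m, by linarith, by linarith⟩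

lemma step_count (ha0 : 0 ≤ a) (ha : a < 1/2) (hT12 : T12 ∈ Set.Icc (0:ℝ) 1)
    (hT21 : T21 ∈ Set.Icc (0:ℝ) 1) {m : ℕ} (hm : 1 ≤ m)
    (hfin : (Atoms a T12 T21 m).Finite) :
    (Atoms a T12 T21 (m+1)).Finite ∧
      (Atoms a T12 T21 (m+1)).ncard ≤ (Atoms a T12 T21 m).ncard + 2 := by
  classical
  set g : Set (ℝ × ℝ) → Set (ℝ × ℝ) :=
    fun T => atomOf a T12 T21 (m+1) (Classical.epsilon (fun x => x ∈ T ∧ x ∈ Icc2)) with hg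
  set B : Set (Set (ℝ × ℝ)) := g '' Atoms a T12 T21 m with hB
  have hgq : ∀ q : ℝ × ℝ, g (atomOf a T12 T21 m q)
      = atomOf a T12 T21 (m+1) (cpt a T12 T21 m q) := fun q => rfl
  have hmemB : ∀ q, q ∈ Icc2 → atomOf a T12 T21 (m+1) (cpt a T12 T21 m q) ∈ B := by
    intro q hq
    exact ⟨atomOf a T12 T21 m q, ⟨q, hq, rfl⟩, rfl⟩
  -- if a child is not canonical, its bits differ from the canonical point's at step m
  have hdiff : ∀ u, u ∈ Icc2 → atomOf a T12 T21 (m+1) u ∉ B →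
      ¬(sbit a T12 T21 m u = sbit a T12 T21 m (cpt a T12 T21 m u)
        ∧ tbit a T12 T21 m u = tbit a T12 T21 m (cpt a T12 T21 m u)) := by
    intro u hu hnB hmm
    apply hnB
    have hcs := cpt_spec a T12 T21 (m := m) hu
    have : atomOf a T12 T21 (m+1) u = atomOf a T12 T21 (m+1) (cpt a T12 T21 m u) := by
      apply atomOf_eq_of_bits
      intro k hk
      rcases Nat.lt_succ_iff_lt_or_eq.1 hk with h | h
      · exact ⟨(hcs.1.2 k h).1.symm, (hcs.1.2 k h).2.symm⟩
      · subst h; exact hmm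
    rw [this]
    exact hmemB u hu
  set D1 : Set (Set (ℝ × ℝ)) := {S | S ∈ Atoms a T12 T21 (m+1) ∧ S ∉ B ∧
    ∃ u, u ∈ Icc2 ∧ S = atomOf a T12 T21 (m+1) u ∧
      straddle1 a T12 T21 m (atomOf a T12 T21 m u)} with hD1
  set D2 : Set (Set (ℝ × ℝ)) := {S | S ∈ Atoms a T12 T21 (m+1) ∧ S ∉ B ∧
    ∃ u, u ∈ Icc2 ∧ S = atomOf a T12 T21 (m+1) u ∧
      straddle2 a T12 T21 m (atomOf a T12 T21 m u)} with hD2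
  have hsub : Atoms a T12 T21 (m+1) ⊆ B ∪ (D1 ∪ D2) := by
    rintro S hS
    obtain ⟨q, hq, rfl⟩ := hS
    by_cases hb : atomOf a T12 T21 (m+1) q ∈ B
    · exact Or.inl hb
    · have hcs := cpt_spec a T12 T21 (m := m) hq
      have hd := hdiff q hq hb
      rcases not_and_or.1 hd with hcase | hcase
      · exact Or.inr (Or.inr ⟨⟨q, hq, rfl⟩, hb, q, hq, rfl,
          straddle2_of_ne a T12 T21 hq hcs.1 hcase⟩)
      · exact Or.inr (Or.inl ⟨⟨q, hq, rfl⟩, hb, q, hq, rfl,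
          straddle1_of_ne a T12 T21 hq hcs.1 hcase⟩)
  -- D1 is a subsingleton
  have hD1sub : D1.Subsingleton := by
    rintro S ⟨hSA, hSB, u, hu, rfl, hstr⟩ S' ⟨hSA', hSB', u', hu', rfl, hstr'⟩
    have hTT : atomOf a T12 T21 m u = atomOf a T12 T21 m u' :=
      U1 a T12 T21 ha0 ha hm hstr hstr'
    have hcpt : cpt a T12 T21 m u = cpt a T12 T21 m u' := cpt_congr a T12 T21 hTT
    have hcs := cpt_spec a T12 T21 (m := m) hu
    have hcs' := cpt_spec a T12 T21 (m := m) hu'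
    -- forced equality of s-bits at step m with the canonical point
    have hsb : sbit a T12 T21 m u = sbit a T12 T21 m (cpt a T12 T21 m u) := by
      by_contra hne
      exact ND a T12 T21 ha0 ha hT12 hT21 hm hstr
        (straddle2_of_ne a T12 T21 hu hcs.1 hne)
    have hsb' : sbit a T12 T21 m u' = sbit a T12 T21 m (cpt a T12 T21 m u) := by
      rw [hcpt]
      by_contra hne
      exact ND a T12 T21 ha0 ha hT12 hT21 hm hstr'
        (straddle2_of_ne a T12 T21 hu' hcs'.1 hne)
    have htb : tbit a T12 T21 m u ≠ tbit a T12 T21 m (cpt a T12 T21 m u) := by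
      intro heq; exact hdiff u hu hSB ⟨hsb, heq⟩
    have htb' : tbit a T12 T21 m u' ≠ tbit a T12 T21 m (cpt a T12 T21 m u) := by
      rw [hcpt]
      intro heq
      exact hdiff u' hu' hSB' ⟨by rw [← hcpt]; exact hsb', heq⟩
    have htbe : tbit a T12 T21 m u = tbit a T12 T21 m u' := heav_two htb htb'
    have hu'mem : u' ∈ atomOf a T12 T21 m u := hTT ▸ mem_atomOf_self a T12 T21 hu' m
    apply atomOf_eq_of_bits
    intro k hk
    rcases Nat.lt_succ_iff_lt_or_eq.1 hk with h | h
    · exact ⟨(hu'mem.2 k h).1.symm, (hu'mem.2 k h).2.symm⟩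
    · subst h; exact ⟨hsb.trans hsb'.symm, htbe⟩
  -- D2 is a subsingleton
  have hD2sub : D2.Subsingleton := by
    rintro S ⟨hSA, hSB, u, hu, rfl, hstr⟩ S' ⟨hSA', hSB', u', hu', rfl, hstr'⟩
    have hTT : atomOf a T12 T21 m u = atomOf a T12 T21 m u' :=
      U2 a T12 T21 ha0 ha hm hstr hstr'
    have hcpt : cpt a T12 T21 m u = cpt a T12 T21 m u' := cpt_congr a T12 T21 hTT
    have hcs := cpt_spec a T12 T21 (m := m) hu
    have hcs' := cpt_spec a T12 T21 (m := m) hu'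
    have htb : tbit a T12 T21 m u = tbit a T12 T21 m (cpt a T12 T21 m u) := by
      by_contra hne
      exact ND a T12 T21 ha0 ha hT12 hT21 hm
        (straddle1_of_ne a T12 T21 hu hcs.1 hne) hstr
    have htb' : tbit a T12 T21 m u' = tbit a T12 T21 m (cpt a T12 T21 m u) := by
      rw [hcpt]
      by_contra hne
      exact ND a T12 T21 ha0 ha hT12 hT21 hm
        (straddle1_of_ne a T12 T21 hu' hcs'.1 hne) hstr'
    have hsb : sbit a T12 T21 m u ≠ sbit a T12 T21 m (cpt a T12 T21 m u) := by
      intro heq; exact hdiff u hu hSB ⟨heq, htb⟩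
    have hsb' : sbit a T12 T21 m u' ≠ sbit a T12 T21 m (cpt a T12 T21 m u) := by
      rw [hcpt]
      intro heq
      exact hdiff u' hu' hSB' ⟨heq, by rw [← hcpt]; exact htb'⟩
    have hsbe : sbit a T12 T21 m u = sbit a T12 T21 m u' := heav_two hsb hsb'
    have hu'mem : u' ∈ atomOf a T12 T21 m u := hTT ▸ mem_atomOf_self a T12 T21 hu' m
    apply atomOf_eq_of_bits
    intro k hk
    rcases Nat.lt_succ_iff_lt_or_eq.1 hk with h | h
    · exact ⟨(hu'mem.2 k h).1.symm, (hu'mem.2 k h).2.symm⟩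
    · subst h; exact ⟨hsbe, htb.trans htb'.symm⟩
  have hBfin : B.Finite := hfin.image g
  have hD1fin : D1.Finite := hD1sub.finite
  have hD2fin : D2.Finite := hD2sub.finite
  have hUfin : (B ∪ (D1 ∪ D2)).Finite := hBfin.union (hD1fin.union hD2fin)
  refine ⟨hUfin.subset hsub, ?_⟩
  calc (Atoms a T12 T21 (m+1)).ncard ≤ (B ∪ (D1 ∪ D2)).ncard :=
        Set.ncard_le_ncard hsub hUfin
    _ ≤ B.ncard + (D1 ∪ D2).ncard := Set.ncard_union_le _ _
    _ ≤ B.ncard + (D1.ncard + D2.ncard) := by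
        have := Set.ncard_union_le D1 D2; omega
    _ ≤ (Atoms a T12 T21 m).ncard + 2 := by
        have h1 : B.ncard ≤ (Atoms a T12 T21 m).ncard := Set.ncard_image_le hfin
        have h2 : D1.ncard ≤ 1 := (Set.ncard_le_one hD1fin).2 fun x hx y hy => hD1sub hx hy
        have h3 : D2.ncard ≤ 1 := (Set.ncard_le_one hD2fin).2 fun x hx y hy => hD2sub hx hy
        omega

end Counting


section Final

variable (a T12 T21 : ℝ)

lemma base_card : (Atoms a T12 T21 1).Finite ∧ (Atoms a T12 T21 1).ncard ≤ 4 := by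
  classical
  set g : Bool × Bool → Set (ℝ × ℝ) := fun b =>
    {p | p ∈ Icc2 ∧ ∀ k < 1, sbit a T12 T21 k p = (bif b.1 then 1 else 0)
      ∧ tbit a T12 T21 k p = (bif b.2 then 1 else 0)} with hg
  have key : ∀ (q : ℝ × ℝ) (v1 v2 : ℝ), q ∈ Icc2 → sbit a T12 T21 0 q = v1 →
      tbit a T12 T21 0 q = v2 →
      ({p | p ∈ Icc2 ∧ ∀ k < 1, sbit a T12 T21 k p = v1 ∧ tbit a T12 T21 k p = v2}
        : Set (ℝ × ℝ)) = atomOf a T12 T21 1 q := by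
    intro q v1 v2 hq h1 h2
    ext p
    constructor
    · rintro ⟨hp, hb⟩
      refine ⟨hp, fun k hk => ?_⟩
      obtain rfl := Nat.lt_one_iff.1 hk
      exact ⟨(hb 0 hk).1.trans h1.symm, (hb 0 hk).2.trans h2.symm⟩
    · rintro ⟨hp, hb⟩
      refine ⟨hp, fun k hk => ?_⟩
      obtain rfl := Nat.lt_one_iff.1 hk
      exact ⟨(hb 0 hk).1.trans h1, (hb 0 hk).2.trans h2⟩
  have hsub : Atoms a T12 T21 1 ⊆ Set.range g := by
    rintro S ⟨q, hq, rfl⟩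
    rcases sbit01 a T12 T21 0 q with hs | hs <;> rcases tbit01 a T12 T21 0 q with ht | ht
    · exact ⟨(false, false), key q 0 0 hq hs ht⟩
    · exact ⟨(false, true), key q 0 1 hq hs ht⟩
    · exact ⟨(true, false), key q 1 0 hq hs ht⟩
    · exact ⟨(true, true), key q 1 1 hq hs ht⟩
  refine ⟨(Set.finite_range g).subset hsub, ?_⟩
  calc (Atoms a T12 T21 1).ncard ≤ (Set.range g).ncard :=
        Set.ncard_le_ncard hsub (Set.finite_range g)
    _ = (g '' Set.univ).ncard := by rw [Set.image_univ]
    _ ≤ (Set.univ : Set (Bool × Bool)).ncard := Set.ncard_image_le Set.finite_univ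
    _ = 4 := by simp [Set.ncard_univ, Nat.card_eq_fintype_card]

lemma atoms_card (ha0 : 0 ≤ a) (ha : a < 1/2) (hT12 : T12 ∈ Set.Icc (0:ℝ) 1)
    (hT21 : T21 ∈ Set.Icc (0:ℝ) 1) :
    ∀ n, (Atoms a T12 T21 (n+1)).Finite ∧ (Atoms a T12 T21 (n+1)).ncard ≤ 2*(n+1)+2 := by
  intro n
  induction n with
  | zero =>
      exact ⟨(base_card a T12 T21).1, by simpa using (base_card a T12 T21).2⟩
  | succ n ih =>
      obtain ⟨hfin, hcard⟩ :=
        step_count a T12 T21 ha0 ha hT12 hT21 (m := n+1) (by omega) ih.1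
      exact ⟨hfin, by omega⟩

end Final

end Stmt19


/-- for the negative 2-circuit with contraction rate `a < 1/2`
(so coordinatewise injectivity holds), the complexity satisfies `C(t) ≤ 2t + 2`
for all `t ≥ 1`. -/
theorem stmt_19 (a T12 T21 : ℝ) (ha0 : 0 ≤ a) (ha : a < 1 / 2)
    (hT12 : T12 ∈ Set.Icc (0:ℝ) 1) (hT21 : T21 ∈ Set.Icc (0:ℝ) 1) :
    ∀ t : ℕ, 1 ≤ t →
      (dynPartition (negCircuit a T12 T21) (negCircuitBaseP T12 T21)
        (t - 1)).ncard ≤ 2 * t + 2 := by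
  intro t ht
  obtain ⟨n, rfl⟩ : ∃ n, t = n + 1 := ⟨t - 1, by omega⟩
  have hd := Stmt19.dyn_eq a T12 T21 ha0 (by linarith) n
  rw [show n + 1 - 1 = n from rfl, hd]
  have h := (Stmt19.atoms_card a T12 T21 ha0 ha hT12 hT21 n).2
  omega
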